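/- arXiv:2211.03255 — 2 statements merged into one kernel-verified Lean document; each statement's English description precedes it below -/
import Mathlib

section
/- Any convex polygon with n ∈ {3, 4, 5} vertices containing a closed unit disk centered at o has a vertex v with |o − v| ≥ 1/cos(π/n) > 2/√3. -/
open Real Finset RealInnerProductSpace

lemma L1 {δ x : ℝ} (h0 : 0 ≤ δ) (h1 : δ ≤ |x|) (h2 : |x| ≤ 2*π - δ) :
    Real.cos x ≤ Real.cos δ := by
  rw [← Real.cos_abs x]
  rcases le_or_gt |x| π with h | h
  · exact Real.cos_le_cos_of_nonneg_of_le_pi h0 h h1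
  · have : Real.cos |x| = Real.cos (2*π - |x|) := by
      rw [Real.cos_sub, Real.cos_two_pi, Real.sin_two_pi]; ring
    rw [this]
    apply Real.cos_le_cos_of_nonneg_of_le_pi h0 (by linarith)
    linarith

lemma L2 (n : ℕ) (hn : 1 ≤ n) (A : Finset ℝ) (hA : A.Nonempty)
    (hcard : A.card ≤ n) (hmem : ∀ a ∈ A, 0 ≤ a ∧ a < 2*π) :
    ∃ θ : ℝ, ∀ a ∈ A, π/n ≤ |θ - a| ∧ |θ - a| ≤ 2*π - π/n := by
  set m := A.card with hm
  have hm0 : 0 < m := Finset.card_pos.mpr hA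
  set f := A.orderIsoOfFin rfl with hf
  set g : Fin m → ℝ := fun i => (f i : ℝ) with hg
  have hgmono : ∀ i j : Fin m, i ≤ j → g i ≤ g j := by
    intro i j hij
    exact Subtype.coe_le_coe.mpr (f.le_iff_le.mpr hij)
  have hgmem : ∀ i : Fin m, g i ∈ A := fun i => (f i).2
  have hg0 : 0 ≤ g ⟨0, hm0⟩ := (hmem _ (hgmem _)).1
  have hglt : ∀ i, g i < 2*π := fun i => (hmem _ (hgmem i)).2
  set b : ℕ → ℝ := fun i => if h : i < m then g ⟨i, h⟩ else g ⟨0, hm0⟩ + 2*π with hb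
  have hπpos : (0:ℝ) < π := Real.pi_pos
  have hnpos : (0:ℝ) < n := by exact_mod_cast hn
  have hmpos : (0:ℝ) < m := by exact_mod_cast hm0
  have htel : ∑ i ∈ Finset.range m, (b (i+1) - b i) = 2*π := by
    rw [Finset.sum_range_sub]
    have hbm : b m = g ⟨0, hm0⟩ + 2*π := by simp [hb]
    have hb0 : b 0 = g ⟨0, hm0⟩ := by simp [hb, hm0]
    rw [hbm, hb0]; ring
  have hex : ∃ i ∈ Finset.range m, 2*π/m ≤ b (i+1) - b i := by
    by_contra hcon
    push_neg at hcon
    have : ∑ i ∈ Finset.range m, (b (i+1) - b i) < ∑ i ∈ Finset.range m, (2*π/m : ℝ) :=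
      Finset.sum_lt_sum_of_nonempty (by simp [Finset.nonempty_range_iff, Nat.pos_iff_ne_zero.mp hm0]) hcon
    rw [htel, Finset.sum_const, Finset.card_range, nsmul_eq_mul] at this
    rw [show (m:ℝ) * (2*π/m) = 2*π from by field_simp] at this
    linarith
  obtain ⟨i, hi, hgap⟩ := hex
  rw [Finset.mem_range] at hi
  have hgapn : 2*π/(n:ℝ) ≤ b (i+1) - b i := by
    refine le_trans ?_ hgap
    apply div_le_div_of_nonneg_left (by linarith) hmpos
    exact_mod_cast hcard
  refine ⟨(b i + b (i+1))/2, ?_⟩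
  intro a ha
  set θ := (b i + b (i+1))/2 with hθ
  have hθl : b i + π/n ≤ θ := by
    rw [hθ]
    have : 2*π/(n:ℝ) = 2*(π/n) := by ring
    rw [this] at hgapn; linarith
  have hθr : θ + π/n ≤ b (i+1) := by
    rw [hθ]
    have : 2*π/(n:ℝ) = 2*(π/n) := by ring
    rw [this] at hgapn; linarith
  have hπn : 0 < π/(n:ℝ) := by positivity
  have hbi : b i = g ⟨i, hi⟩ := by simp [hb, hi]
  have hbig0 : g ⟨0, hm0⟩ ≤ b i := by rw [hbi]; exact hgmono _ _ (by simp)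
  have hb1ub : b (i+1) ≤ g ⟨0, hm0⟩ + 2*π := by
    by_cases h1 : i + 1 < m
    · simp only [hb, dif_pos h1]
      have := hglt ⟨i+1, h1⟩; linarith
    · simp [hb, h1]
  -- express a via f
  obtain ⟨j, hj⟩ : ∃ j : Fin m, g j = a := ⟨f.symm ⟨a, ha⟩, by
    show ((f (f.symm ⟨a, ha⟩) : {x // x ∈ A}) : ℝ) = a
    rw [OrderIso.apply_symm_apply]⟩
  have ha0 : 0 ≤ a := (hmem a ha).1
  have halt : a < 2*π := (hmem a ha).2
  have hag0 : g ⟨0, hm0⟩ ≤ a := by rw [← hj]; exact hgmono _ _ (by simp [Fin.le_def])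
  rcases le_or_gt j.val i with hji | hji
  · -- a ≤ b i, θ - a ≥ π/n
    have hab : a ≤ b i := by rw [← hj, hbi]; exact hgmono _ _ hji
    have h1 : π/n ≤ θ - a := by linarith
    have h2 : θ - a ≤ 2*π - π/n := by linarith
    rw [abs_of_nonneg (by linarith)]
    exact ⟨h1, h2⟩
  · -- b (i+1) ≤ a
    have hj1 : i + 1 < m := lt_of_le_of_lt hji j.isLt
    have hba : b (i+1) ≤ a := by
      rw [← hj]
      simp only [hb, dif_pos hj1]
      exact hgmono _ _ (by simpa [Fin.le_def] using hji)
    have h1 : π/n ≤ a - θ := by linarith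
    have h2 : a - θ ≤ 2*π - π/n := by linarith
    rw [abs_sub_comm, abs_of_nonneg (by linarith)]
    exact ⟨h1, h2⟩


lemma L3 (N : ℕ) (hN : 3 ≤ N) (F : Finset (EuclideanSpace ℝ (Fin 2)))
    (o : EuclideanSpace ℝ (Fin 2)) (hcard : F.card = N)
    (hball : Metric.closedBall o 1 ⊆ convexHull ℝ (F : Set _)) :
    ∃ v ∈ F, 1 / Real.cos (π / N) ≤ dist o v := by
  classical
  have hπ : (0:ℝ) < π := Real.pi_pos
  have hN3 : (3:ℝ) ≤ N := by exact_mod_cast hN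
  have hδub : π / N ≤ π / 3 := by
    apply div_le_div_of_nonneg_left (le_of_lt hπ) (by norm_num) hN3
  have hδpos : 0 < π / (N:ℝ) := by positivity
  have hcos : 0 < Real.cos (π / N) :=
    Real.cos_pos_of_mem_Ioo ⟨by linarith, by linarith [Real.pi_gt_three]⟩
  by_contra hcon
  push_neg at hcon
  -- hcon : ∀ v ∈ F, dist o v < 1 / cos (π/N)
  -- angle function
  set δ := π / (N:ℝ) with hδ
  set arg' : EuclideanSpace ℝ (Fin 2) → ℝ := fun w =>
    if Complex.arg ⟨w 0, w 1⟩ < 0 then Complex.arg ⟨w 0, w 1⟩ + 2*π else Complex.arg ⟨w 0, w 1⟩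
    with harg'
  set A : Finset ℝ := (F.filter (· ≠ o)).image (fun v => arg' (v - o)) with hA
  have hAcard : A.card ≤ N := by
    calc A.card ≤ (F.filter (· ≠ o)).card := Finset.card_image_le
    _ ≤ F.card := Finset.card_filter_le _ _
    _ = N := hcard
  have hAne : A.Nonempty := by
    have h2 : 1 < F.card := by omega
    obtain ⟨a, ha, b, hb, hab⟩ := Finset.one_lt_card.mp h2
    rcases eq_or_ne a o with rfl | hao
    · exact ⟨arg' (b - a), Finset.mem_image.mpr ⟨b, Finset.mem_filter.mpr ⟨hb, hab.symm⟩, rfl⟩⟩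
    · exact ⟨arg' (a - o), Finset.mem_image.mpr ⟨a, Finset.mem_filter.mpr ⟨ha, hao⟩, rfl⟩⟩
  have hAmem : ∀ a ∈ A, 0 ≤ a ∧ a < 2*π := by
    intro a ha
    rw [hA, Finset.mem_image] at ha
    obtain ⟨v, _, rfl⟩ := ha
    set z : ℂ := ⟨(v - o) 0, (v - o) 1⟩
    have h1 := Complex.arg_le_pi z
    have h2 := Complex.neg_pi_lt_arg z
    rw [harg']
    dsimp only
    split_ifs with h
    · constructor <;> linarith
    · push_neg at h
      constructor <;> linarith
  obtain ⟨θ, hθ⟩ := L2 N (by omega) A hAne hAcard hAmem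
  -- the unit direction
  set u : EuclideanSpace ℝ (Fin 2) :=
    (WithLp.equiv 2 (Fin 2 → ℝ)).symm ![Real.cos θ, Real.sin θ] with hu
  have hnormu : ‖u‖ = 1 := by
    rw [EuclideanSpace.norm_eq]
    simp [hu, Fin.sum_univ_two]
  have hinner : ∀ x : EuclideanSpace ℝ (Fin 2),
      ⟪u, x⟫ = Real.cos θ * x 0 + Real.sin θ * x 1 := by
    intro x
    rw [PiLp.inner_apply]
    simp [hu, Fin.sum_univ_two]; ring
  -- every vertex lies strictly inside halfspace
  have hkey : ∀ v ∈ F, ⟪u, v⟫ < ⟪u, o⟫ + 1 := by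
    intro v hv
    rcases eq_or_ne v o with rfl | hvo
    · linarith
    · set w : EuclideanSpace ℝ (Fin 2) := v - o with hw
      set z : ℂ := ⟨w 0, w 1⟩ with hz
      have hwne : w ≠ 0 := sub_ne_zero_of_ne hvo
      have hzne : z ≠ 0 := by
        intro h
        apply hwne
        have h0 : w 0 = 0 := congrArg Complex.re h
        have h1 : w 1 = 0 := congrArg Complex.im h
        ext i; fin_cases i <;> simpa
      have habs : ‖z‖ = ‖w‖ := by
        rw [EuclideanSpace.norm_eq, Complex.norm_def, Complex.normSq_mk]
        simp [Fin.sum_univ_two, sq_abs, sq]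
      have hrpos : 0 < ‖z‖ := by
        rw [norm_pos_iff]; exact hzne
      have hcosa : Real.cos (arg' w) = z.re / ‖z‖ := by
        rw [harg']
        dsimp only
        split_ifs with h
        · rw [Real.cos_add_two_pi, Complex.cos_arg hzne]
        · rw [Complex.cos_arg hzne]
      have hsina : Real.sin (arg' w) = z.im / ‖z‖ := by
        rw [harg']
        dsimp only
        split_ifs with h
        · rw [Real.sin_add_two_pi, Complex.sin_arg]
        · rw [Complex.sin_arg]
      have hmemA : arg' w ∈ A := by
        rw [hA, Finset.mem_image]
        exact ⟨v, Finset.mem_filter.mpr ⟨hv, hvo⟩, rfl⟩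
      obtain ⟨hθ1, hθ2⟩ := hθ _ hmemA
      have hcosle : Real.cos (θ - arg' w) ≤ Real.cos δ :=
        L1 (le_of_lt hδpos) hθ1 hθ2
      have hinw : ⟪u, w⟫ = ‖z‖ * Real.cos (θ - arg' w) := by
        rw [hinner w, Real.cos_sub, hcosa, hsina]
        have h1 : z.re = w 0 := rfl
        have h2 : z.im = w 1 := rfl
        rw [← h1, ← h2]
        field_simp
      have hnw : ‖w‖ < 1 / Real.cos δ := by
        rw [hw, ← dist_eq_norm, dist_comm]
        exact hcon v hv
      have hlt : ⟪u, w⟫ < 1 := by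
        rw [hinw, habs]
        calc ‖w‖ * Real.cos (θ - arg' w) ≤ ‖w‖ * Real.cos δ :=
              mul_le_mul_of_nonneg_left hcosle (norm_nonneg w)
        _ < (1 / Real.cos δ) * Real.cos δ :=
              mul_lt_mul_of_pos_right hnw hcos
        _ = 1 := by field_simp
      have : ⟪u, v⟫ = ⟪u, o⟫ + ⟪u, w⟫ := by
        rw [hw, inner_sub_right]; ring
      linarith
  -- convexity contradiction
  have hHconv : Convex ℝ {x : EuclideanSpace ℝ (Fin 2) | ⟪u, x⟫ < ⟪u, o⟫ + 1} := by
    apply convex_halfSpace_lt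
    exact ⟨fun x y => inner_add_right u x y, fun r x => real_inner_smul_right u x r⟩
  have hsub : convexHull ℝ (F : Set _) ⊆ {x : EuclideanSpace ℝ (Fin 2) | ⟪u, x⟫ < ⟪u, o⟫ + 1} :=
    convexHull_min (fun v hv => hkey v hv) hHconv
  have hpt : o + u ∈ Metric.closedBall o 1 := by
    rw [Metric.mem_closedBall, dist_comm, dist_eq_norm]
    simp [hnormu]
  have := hsub (hball hpt)
  rw [Set.mem_setOf_eq, inner_add_right, real_inner_self_eq_norm_sq, hnormu] at this
  norm_num at this



theorem stmt_14 (n : ℕ) (hn : n = 3 ∨ n = 4 ∨ n = 5)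
    (P : Set (EuclideanSpace ℝ (Fin 2))) (o : EuclideanSpace ℝ (Fin 2))
    (F : Finset (EuclideanSpace ℝ (Fin 2))) (hP : P = convexHull ℝ (F : Set _))
    (hF : Set.extremePoints ℝ P = (F : Set _)) (hcard : F.card = n)
    (hball : Metric.closedBall o 1 ⊆ P) :
    ∃ v ∈ F, 1 / Real.cos (Real.pi / n) ≤ dist o v ∧
      2 / Real.sqrt 3 < 1 / Real.cos (Real.pi / n) := by
  have hn3 : 3 ≤ n := by rcases hn with rfl | rfl | rfl <;> norm_num
  rw [hP] at hball
  obtain ⟨v, hv, hdist⟩ := L3 n hn3 F o hcard hball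
  refine ⟨v, hv, hdist, ?_⟩
  rcases hn with rfl | rfl | rfl
  · rw [show ((3:ℕ):ℝ) = 3 by norm_num, Real.cos_pi_div_three]
    have h3 : (1:ℝ) < Real.sqrt 3 := by
      nlinarith [Real.sq_sqrt (by norm_num : (3:ℝ) ≥ 0), Real.sqrt_nonneg 3]
    rw [div_lt_div_iff₀ (by positivity) (by norm_num)]
    nlinarith
  · rw [show ((4:ℕ):ℝ) = 4 by norm_num, Real.cos_pi_div_four]
    have h3 : Real.sqrt 2 < Real.sqrt 3 := by
      apply Real.sqrt_lt_sqrt <;> norm_num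
    have h2 : (0:ℝ) < Real.sqrt 2 := by positivity
    have h3' : (0:ℝ) < Real.sqrt 3 := by positivity
    rw [div_lt_div_iff₀ (by positivity) (by positivity)]
    nlinarith [Real.sq_sqrt (by norm_num : (2:ℝ) ≥ 0)]
  · rw [show ((5:ℕ):ℝ) = 5 by norm_num, Real.cos_pi_div_five]
    have h5 : Real.sqrt 5 < 3 := by
      nlinarith [Real.sq_sqrt (by norm_num : (5:ℝ) ≥ 0), Real.sqrt_nonneg 5]
    have h3 : (0:ℝ) < Real.sqrt 3 := by positivity
    have h5' : (0:ℝ) ≤ Real.sqrt 5 := Real.sqrt_nonneg 5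
    rw [div_lt_div_iff₀ (by positivity) (by positivity)]
    nlinarith [Real.sq_sqrt (by norm_num : (3:ℝ) ≥ 0), Real.sq_sqrt (by norm_num : (5:ℝ) ≥ 0)]
end

section
/- In an admissible set S ⊆ ℝ² with x ∈ S having a bounded Voronoi cell, every vertex u of the polygon V(x) satisfies |u − x| ≥ 2/√3. -/
/-- A uniformly separated set is finite inside any closed ball. -/
lemma aux_finite_sep (S : Set (EuclideanSpace ℝ (Fin 2)))
    (hadm : ∀ y ∈ S, ∀ y' ∈ S, y ≠ y' → 2 ≤ dist y y')
    (u : EuclideanSpace ℝ (Fin 2)) (R : ℝ) :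
    {y | y ∈ S ∧ dist u y ≤ R}.Finite := by
  classical
  obtain ⟨t, htf, hcov⟩ := (Metric.totallyBounded_iff.mp
    (isCompact_closedBall u R).totallyBounded) 1 one_pos
  have hsub : {y | y ∈ S ∧ dist u y ≤ R} ⊆
      ⋃ c ∈ t, {y | y ∈ S ∧ y ∈ Metric.ball c 1} := fun y hy => ?_
  refine Set.Finite.subset (Set.Finite.biUnion htf (fun c _ => ?_)) hsub
  · -- each piece {y ∈ S ∩ ball c 1} is a subsingleton
    refine Set.Subsingleton.finite (fun a ha b hb => ?_)
    by_contra hne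
    have h2 := hadm a ha.1 b hb.1 hne
    have : dist a b < 2 := by
      calc dist a b ≤ dist a c + dist c b := dist_triangle a c b
        _ < 2 := by
          have h1 := ha.2
          have h2 := hb.2
          rw [Metric.mem_ball] at h1 h2
          rw [dist_comm c b]; linarith
    linarith
  · have hy' : y ∈ ⋃ c ∈ t, Metric.ball c 1 := by
      apply hcov
      rw [Metric.mem_closedBall, dist_comm]
      exact hy.2
    simp only [Set.mem_iUnion] at hy' ⊢
    obtain ⟨c, hc, hyc⟩ := hy'
    exact ⟨c, hc, hy.1, hyc⟩

/-- An orthogonal nonzero vector exists in the plane. -/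
lemma aux_orth (w : EuclideanSpace ℝ (Fin 2)) (hw : w ≠ 0) :
    ∃ v : EuclideanSpace ℝ (Fin 2), v ≠ 0 ∧ (inner ℝ v w : ℝ) = 0 := by
  refine ⟨(WithLp.equiv 2 (Fin 2 → ℝ)).symm ![-(w 1), w 0], ?_, ?_⟩
  · intro h
    apply hw
    have h0 : ((WithLp.equiv 2 (Fin 2 → ℝ)).symm ![-(w 1), w 0]) 0 = 0 := by rw [h]; rfl
    have h1 : ((WithLp.equiv 2 (Fin 2 → ℝ)).symm ![-(w 1), w 0]) 1 = 0 := by rw [h]; rfl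
    simp at h0 h1
    ext i
    fin_cases i <;> simp [h0, h1] <;> rfl
  · rw [PiLp.inner_apply, Fin.sum_univ_two]
    simp
    ring

/-- An extreme point of the Voronoi cell of x is equidistant from x and two
other points of S. -/
lemma aux_two (S : Set (EuclideanSpace ℝ (Fin 2)))
    (hadm : ∀ y ∈ S, ∀ y' ∈ S, y ≠ y' → 2 ≤ dist y y')
    (x : EuclideanSpace ℝ (Fin 2)) (hx : x ∈ S)
    (u : EuclideanSpace ℝ (Fin 2))
    (hu : u ∈ Set.extremePoints ℝ {z | ∀ y ∈ S, dist x z ≤ dist y z}) :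
    ∃ y1 ∈ S, ∃ y2 ∈ S, y1 ≠ x ∧ y2 ≠ x ∧ y1 ≠ y2 ∧
      dist u y1 = dist u x ∧ dist u y2 = dist u x := by
  classical
  obtain ⟨huC, hext⟩ := hu
  have huC' : ∀ y ∈ S, dist x u ≤ dist y u := huC
  by_contra hcon
  push_neg at hcon
  -- the set of equidistant neighbors other than x is a subsingleton
  have hsub : ∀ y1 ∈ S, y1 ≠ x → dist u y1 = dist u x →
      ∀ y2 ∈ S, y2 ≠ x → dist u y2 = dist u x → y1 = y2 := by
    intro y1 h1 h1x h1d y2 h2 h2x h2d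
    by_contra hne
    exact (hcon y1 h1 y2 h2 h1x h2x hne h1d) h2d
  -- choose a direction v orthogonal to (y1 - x) for the (at most one) neighbor y1
  have hv : ∃ v : EuclideanSpace ℝ (Fin 2), v ≠ 0 ∧
      ∀ y ∈ S, y ≠ x → dist u y = dist u x → (inner ℝ v (y - x) : ℝ) = 0 := by
    by_cases hT : ∃ y1 ∈ S, y1 ≠ x ∧ dist u y1 = dist u x
    · obtain ⟨y1, hy1S, hy1x, hy1d⟩ := hT
      obtain ⟨v, hv0, hvw⟩ := aux_orth (y1 - x) (sub_ne_zero.mpr hy1x)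
      refine ⟨v, hv0, fun y hyS hyx hyd => ?_⟩
      have : y = y1 := hsub y hyS hyx hyd y1 hy1S hy1x hy1d
      rw [this]; exact hvw
    · push_neg at hT
      refine ⟨EuclideanSpace.single 0 1, ?_, fun y hyS hyx hyd => absurd hyd (hT y hyS hyx)⟩
      intro h
      have := congrArg (fun z : EuclideanSpace ℝ (Fin 2) => z 0) h
      simp [EuclideanSpace.single_apply] at this
  obtain ⟨v, hv0, hvP⟩ := hv
  -- finiteness and margin
  have hGfin : {y | y ∈ S ∧ dist u y ≤ dist u x + 2 ∧ y ≠ x ∧ dist u y ≠ dist u x}.Finite := by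
    apply Set.Finite.subset (aux_finite_sep S hadm u (dist u x + 2))
    intro y hy; exact ⟨hy.1, hy.2.1⟩
  set G := {y | y ∈ S ∧ dist u y ≤ dist u x + 2 ∧ y ≠ x ∧ dist u y ≠ dist u x} with hGdef
  have hGpos : ∀ y ∈ G, dist u x < dist u y := by
    intro y hy
    have h1 : dist x u ≤ dist y u := huC' y hy.1
    rw [dist_comm x u, dist_comm y u] at h1
    exact lt_of_le_of_ne h1 (Ne.symm hy.2.2.2)
  obtain ⟨ε, hε0, hεG⟩ : ∃ ε > 0, ∀ y ∈ G, dist u x + ε ≤ dist u y := by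
    rcases G.eq_empty_or_nonempty with hG | hG
    · exact ⟨1, one_pos, fun y hy => by rw [hG] at hy; exact absurd hy (Set.notMem_empty y)⟩
    · obtain ⟨y0, hy0G, hy0min⟩ := Set.exists_min_image G (fun y => dist u y) hGfin hG
      exact ⟨dist u y0 - dist u x, by linarith [hGpos y0 hy0G],
        fun y hy => by have := hy0min y hy; linarith⟩
  set ε' := min ε 1 with hε'def
  have hε'0 : 0 < ε' := lt_min hε0 one_pos
  have hε'ε : ε' ≤ ε := min_le_left _ _
  have hε'1 : ε' ≤ 1 := min_le_right _ _
  -- the key perturbation step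
  have key : ∀ d : EuclideanSpace ℝ (Fin 2), ‖d‖ = ε' / 2 →
      (∀ y ∈ S, y ≠ x → dist u y = dist u x → (inner ℝ d (y - x) : ℝ) = 0) →
      ∀ y ∈ S, dist x (u + d) ≤ dist y (u + d) := by
    intro d hd hdP y hyS
    by_cases hyx : y = x
    · rw [hyx]
    have hxd : dist x (u + d) ≤ dist u x + ε' / 2 := by
      calc dist x (u + d) ≤ dist x u + dist u (u + d) := dist_triangle x u (u + d)
        _ = dist u x + ε' / 2 := by rw [dist_comm x u, dist_self_add_right, hd]
    have hyd' : dist u y - ε' / 2 ≤ dist y (u + d) := by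
      have h1 : dist y u ≤ dist y (u + d) + dist (u + d) u := dist_triangle y (u + d) u
      have h2 : dist (u + d) u = ε' / 2 := by rw [dist_comm, dist_self_add_right, hd]
      rw [dist_comm y u] at h1
      linarith
    by_cases hyeq : dist u y = dist u x
    · -- equidistant neighbor: exact equality of distances after perturbation
      have hinner : (inner ℝ d (y - x) : ℝ) = 0 := hdP y hyS hyx hyeq
      have hsq : dist x (u + d) ^ 2 = dist y (u + d) ^ 2 := by
        rw [dist_eq_norm, dist_eq_norm]
        have e1 : x - (u + d) = (x - u) + (-d) := by abel
        have e2 : y - (u + d) = (y - u) + (-d) := by abel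
        rw [e1, e2, norm_add_sq_real, norm_add_sq_real]
        have hnx : ‖x - u‖ = dist u x := by rw [← dist_eq_norm, dist_comm]
        have hny : ‖y - u‖ = dist u y := by rw [← dist_eq_norm, dist_comm]
        have hdiff : (inner ℝ (x - u) (-d) : ℝ) - inner ℝ (y - u) (-d) = 0 := by
          have : (inner ℝ (x - u) (-d) : ℝ) - inner ℝ (y - u) (-d) = inner ℝ (x - y) (-d) := by
            rw [← inner_sub_left]; congr 1; abel
          rw [this, inner_neg_right, real_inner_comm]
          have : (inner ℝ d (x - y) : ℝ) = - inner ℝ d (y - x) := by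
            rw [← inner_neg_right]; congr 1; abel
          rw [this, hinner]; ring
        rw [hnx, hny, hyeq]
        linarith
      have h1 : 0 ≤ dist x (u + d) := dist_nonneg
      have h2 : 0 ≤ dist y (u + d) := dist_nonneg
      nlinarith [hsq]
    · by_cases hyF : dist u y ≤ dist u x + 2
      · have hyG : y ∈ G := ⟨hyS, hyF, hyx, hyeq⟩
        have := hεG y hyG
        linarith
      · push_neg at hyF
        linarith
  -- construct the perturbation vector
  have hnv : (0:ℝ) < ‖v‖ := norm_pos_iff.mpr hv0
  set d := (ε' / (2 * ‖v‖)) • v with hddef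
  have hdnorm : ‖d‖ = ε' / 2 := by
    rw [hddef, norm_smul, Real.norm_eq_abs, abs_of_pos (by positivity)]
    field_simp
  have hdP : ∀ y ∈ S, y ≠ x → dist u y = dist u x → (inner ℝ d (y - x) : ℝ) = 0 := by
    intro y hyS hyx hyd
    rw [hddef, real_inner_smul_left, hvP y hyS hyx hyd, mul_zero]
  have hdP' : ∀ y ∈ S, y ≠ x → dist u y = dist u x → (inner ℝ (-d) (y - x) : ℝ) = 0 := by
    intro y hyS hyx hyd
    rw [inner_neg_left, hdP y hyS hyx hyd, neg_zero]
  have hd0 : d ≠ 0 := by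
    intro h
    rw [h, norm_zero] at hdnorm
    linarith
  have h1 : u + d ∈ {z | ∀ y ∈ S, dist x z ≤ dist y z} := key d hdnorm hdP
  have h2 : u + (-d) ∈ {z | ∀ y ∈ S, dist x z ≤ dist y z} :=
    key (-d) (by rw [norm_neg]; exact hdnorm) hdP'
  have hmem : u ∈ openSegment ℝ (u + d) (u + (-d)) := by
    refine ⟨1/2, 1/2, by norm_num, by norm_num, by norm_num, ?_⟩
    module
  have := hext h1 h2 hmem
  have : u + d = u := this
  exact hd0 (by simpa using this)

theorem stmt_16 (S : Set (EuclideanSpace ℝ (Fin 2)))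
    (hadm : ∀ y ∈ S, ∀ y' ∈ S, y ≠ y' → 2 ≤ dist y y')
    (x : EuclideanSpace ℝ (Fin 2)) (hx : x ∈ S)
    (hbdd : Bornology.IsBounded {z | ∀ y ∈ S, dist x z ≤ dist y z})
    (u : EuclideanSpace ℝ (Fin 2))
    (hu : u ∈ Set.extremePoints ℝ {z | ∀ y ∈ S, dist x z ≤ dist y z}) :
    2 / Real.sqrt 3 ≤ dist u x := by
  obtain ⟨y1, hy1S, y2, hy2S, hy1x, hy2x, hy12, hd1, hd2⟩ := aux_two S hadm x hx u hu
  set r := dist u x with hrdef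
  set a := x - u with hadef
  set b := y1 - u with hbdef
  set c := y2 - u with hcdef
  have hna : ‖a‖ = r := by rw [hadef, ← dist_eq_norm, dist_comm]
  have hnb : ‖b‖ = r := by rw [hbdef, ← dist_eq_norm, dist_comm, hd1]
  have hnc : ‖c‖ = r := by rw [hcdef, ← dist_eq_norm, dist_comm, hd2]
  have hab : (2:ℝ) ≤ ‖a - b‖ := by
    have : a - b = x - y1 := by rw [hadef, hbdef]; abel
    rw [this, ← dist_eq_norm]
    exact hadm x hx y1 hy1S (Ne.symm hy1x)
  have hac : (2:ℝ) ≤ ‖a - c‖ := by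
    have : a - c = x - y2 := by rw [hadef, hcdef]; abel
    rw [this, ← dist_eq_norm]
    exact hadm x hx y2 hy2S (Ne.symm hy2x)
  have hbc : (2:ℝ) ≤ ‖b - c‖ := by
    have : b - c = y1 - y2 := by rw [hbdef, hcdef]; abel
    rw [this, ← dist_eq_norm]
    exact hadm y1 hy1S y2 hy2S hy12
  have e1 := norm_sub_sq_real a b
  have e2 := norm_sub_sq_real a c
  have e3 := norm_sub_sq_real b c
  have e4 : ‖a + b + c‖ ^ 2 = ‖a‖^2 + ‖b‖^2 + ‖c‖^2
      + 2 * inner ℝ a b + 2 * inner ℝ a c + 2 * inner ℝ b c := by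
    rw [norm_add_sq_real (a + b) c, norm_add_sq_real a b, inner_add_left]
    ring
  have hr0 : (0:ℝ) ≤ r := dist_nonneg
  have hr2 : 4 / 3 ≤ r ^ 2 := by
    nlinarith [sq_nonneg (‖a + b + c‖), hab, hac, hbc, norm_nonneg (a - b),
      norm_nonneg (a - c), norm_nonneg (b - c)]
  have hs : (0:ℝ) < Real.sqrt 3 := Real.sqrt_pos.mpr (by norm_num)
  rw [div_le_iff₀ hs]
  nlinarith [Real.sq_sqrt (show (0:ℝ) ≤ 3 by norm_num), Real.sqrt_nonneg 3,
    mul_nonneg hr0 (Real.sqrt_nonneg 3)]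
end
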